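/- Assume f̲_0 = f̄_0 = 0, f̄_j = f̄ for all j ∈ {1,…,n} for a common f̄ > 0, and 0 ≤ d < f̄. Then for every partition (J1, J2, J3) of {1,…,n} (pairwise disjoint sets with union {1,…,n}) and every (x,f) ∈ S, the inequality ∑_{j∈J1} (f̄ − d)(f̄ x_j + f_j) + ∑_{j∈J2} (f̄ − d)·d·x_j + ∑_{j∈J3} d(f̄ x_j − f_j) ≥ (f̄ − d)·d holds; consequently these inequalities are valid for conv(S). -/

import Mathlib

open scoped BigOperators

/-- validity of the partition inequalities for `S` and hence for
`conv(S)`. -/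
theorem partition_inequalities_valid (n : ℕ) (hn : 1 ≤ n)
    (fbar d : ℝ) (hfbar : 0 < fbar) (hd0 : 0 ≤ d) (hd : d < fbar)
    (S : Set ((Fin n → ℝ) × (Fin (n + 1) → ℝ)))
    (hS : S = {p | (∀ j, p.1 j = 0 ∨ p.1 j = 1) ∧
      (∑ j, p.2 j) = d ∧ p.2 0 = 0 ∧
      ∀ j : Fin n, -(fbar * p.1 j) ≤ p.2 j.succ ∧ p.2 j.succ ≤ fbar * p.1 j}) :
    ∀ J1 J2 J3 : Finset (Fin n),
      Disjoint J1 J2 → Disjoint J1 J3 → Disjoint J2 J3 →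
      J1 ∪ J2 ∪ J3 = Finset.univ →
      (∀ p ∈ S,
        (∑ j ∈ J1, (fbar - d) * (fbar * p.1 j + p.2 j.succ)) +
        (∑ j ∈ J2, (fbar - d) * d * p.1 j) +
        (∑ j ∈ J3, d * (fbar * p.1 j - p.2 j.succ)) ≥ (fbar - d) * d) ∧
      (∀ p ∈ convexHull ℝ S,
        (∑ j ∈ J1, (fbar - d) * (fbar * p.1 j + p.2 j.succ)) +
        (∑ j ∈ J2, (fbar - d) * d * p.1 j) +
        (∑ j ∈ J3, d * (fbar * p.1 j - p.2 j.succ)) ≥ (fbar - d) * d) := by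
  intro J1 J2 J3 h12 h13 h23 hUnion
  have hfd : (0:ℝ) ≤ fbar - d := by linarith
  have key : ∀ p ∈ S,
      (∑ j ∈ J1, (fbar - d) * (fbar * p.1 j + p.2 j.succ)) +
      (∑ j ∈ J2, (fbar - d) * d * p.1 j) +
      (∑ j ∈ J3, d * (fbar * p.1 j - p.2 j.succ)) ≥ (fbar - d) * d := by
    intro p hp
    rw [hS] at hp
    obtain ⟨hx, hsum, h0, hbox⟩ := hp
    have hxnn : ∀ j, (0:ℝ) ≤ p.1 j := by
      intro j; rcases hx j with h | h <;> rw [h] <;> norm_num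
    have hsum' : ∑ j : Fin n, p.2 j.succ = d := by
      rw [Fin.sum_univ_succ, h0, zero_add] at hsum; exact hsum
    by_cases hJ2 : ∃ j ∈ J2, p.1 j = 1
    · obtain ⟨j0, hj0, hxj0⟩ := hJ2
      have hA : 0 ≤ ∑ j ∈ J1, (fbar - d) * (fbar * p.1 j + p.2 j.succ) :=
        Finset.sum_nonneg fun j _ => mul_nonneg hfd (by linarith [(hbox j).1])
      have hC : 0 ≤ ∑ j ∈ J3, d * (fbar * p.1 j - p.2 j.succ) :=
        Finset.sum_nonneg fun j _ => mul_nonneg hd0 (by linarith [(hbox j).2])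
      have hB : (fbar - d) * d * p.1 j0 ≤ ∑ j ∈ J2, (fbar - d) * d * p.1 j :=
        Finset.single_le_sum (fun j _ => mul_nonneg (mul_nonneg hfd hd0) (hxnn j)) hj0
      rw [hxj0, mul_one] at hB
      linarith
    · push_neg at hJ2
      have hx2 : ∀ j ∈ J2, p.1 j = 0 := fun j hj => (hx j).resolve_right (hJ2 j hj)
      have hf2 : ∀ j ∈ J2, p.2 j.succ = 0 := by
        intro j hj
        have h1 := (hbox j).1; have h2 := (hbox j).2
        rw [hx2 j hj, mul_zero] at h1 h2
        rw [neg_zero] at h1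
        linarith
      have hdisj : Disjoint (J1 ∪ J2) J3 := Finset.disjoint_union_left.2 ⟨h13, h23⟩
      have hsplit : (∑ j ∈ J1, p.2 j.succ) + (∑ j ∈ J2, p.2 j.succ)
          + (∑ j ∈ J3, p.2 j.succ) = d := by
        rw [← hsum', ← hUnion, Finset.sum_union hdisj, Finset.sum_union h12]
      have hs2 : (∑ j ∈ J2, p.2 j.succ) = 0 := Finset.sum_eq_zero hf2
      set X1 := ∑ j ∈ J1, p.1 j with hX1def
      set X3 := ∑ j ∈ J3, p.1 j with hX3def
      set s1 := ∑ j ∈ J1, p.2 j.succ with hs1def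
      set s3 := ∑ j ∈ J3, p.2 j.succ with hs3def
      have hs13 : s1 + s3 = d := by rw [hs2] at hsplit; linarith
      -- sum identities
      have hA : ∑ j ∈ J1, (fbar - d) * (fbar * p.1 j + p.2 j.succ)
          = (fbar - d) * fbar * X1 + (fbar - d) * s1 := by
        rw [hX1def, hs1def, Finset.mul_sum, Finset.mul_sum, ← Finset.sum_add_distrib]
        exact Finset.sum_congr rfl fun j _ => by ring
      have hB : ∑ j ∈ J2, (fbar - d) * d * p.1 j = 0 :=
        Finset.sum_eq_zero fun j hj => by rw [hx2 j hj, mul_zero]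
      have hC : ∑ j ∈ J3, d * (fbar * p.1 j - p.2 j.succ)
          = d * fbar * X3 - d * s3 := by
        rw [hX3def, hs3def, Finset.mul_sum, Finset.mul_sum, ← Finset.sum_sub_distrib]
        exact Finset.sum_congr rfl fun j _ => by ring
      -- bounds
      have hs1low : -(fbar * X1) ≤ s1 := by
        have h1 : ∑ j ∈ J1, -(fbar * p.1 j) ≤ s1 :=
          Finset.sum_le_sum fun j _ => (hbox j).1
        have h2 : ∑ j ∈ J1, -(fbar * p.1 j) = -(fbar * X1) := by
          rw [hX1def, Finset.mul_sum, ← Finset.sum_neg_distrib]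
        linarith [h2 ▸ h1]
      have hs3up : s3 ≤ fbar * X3 := by
        have h1 : s3 ≤ ∑ j ∈ J3, fbar * p.1 j :=
          Finset.sum_le_sum fun j _ => (hbox j).2
        rw [← Finset.mul_sum] at h1
        exact h1
      -- integrality
      have hcard : ∀ J : Finset (Fin n),
          ∑ j ∈ J, p.1 j = ((J.filter fun j => p.1 j = 1).card : ℝ) := by
        intro J
        rw [← Finset.sum_filter_add_sum_filter_not J (fun j => p.1 j = 1)]
        rw [Finset.sum_congr rfl (fun j hj => (Finset.mem_filter.1 hj).2),
            Finset.sum_congr rfl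
              (fun j hj => (hx j).resolve_right (Finset.mem_filter.1 hj).2)]
        simp
      have hX1c := hcard J1
      have hX3c := hcard J3
      have key2 : d ≤ (fbar - d) * X1 + s1 + d * X3 := by
        rcases le_or_gt ((J3.filter fun j => p.1 j = 1).card)
            ((J1.filter fun j => p.1 j = 1).card) with h | h
        · have hX : X3 ≤ X1 := by
            rw [hX3def, hX1def, hX3c, hX1c]; exact_mod_cast h
          nlinarith [mul_le_mul_of_nonneg_left hX hfd]
        · have hX : X1 + 1 ≤ X3 := by
            rw [hX1def, hX3def, hX1c, hX3c]
            have : ((J1.filter fun j => p.1 j = 1).card : ℝ) + 1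
                ≤ ((J3.filter fun j => p.1 j = 1).card : ℝ) := by
              exact_mod_cast h
            linarith
          nlinarith [mul_le_mul_of_nonneg_left hX hd0]
      have hds : d * s1 + d * s3 = d * d := by rw [← mul_add, hs13]
      rw [hA, hB, hC]
      nlinarith [mul_nonneg hfbar.le (sub_nonneg.2 key2), hds]
  refine ⟨key, ?_⟩
  have hconv : Convex ℝ {q : (Fin n → ℝ) × (Fin (n + 1) → ℝ) |
      (fbar - d) * d ≤ (∑ j ∈ J1, (fbar - d) * (fbar * q.1 j + q.2 j.succ)) +
        (∑ j ∈ J2, (fbar - d) * d * q.1 j) +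
        (∑ j ∈ J3, d * (fbar * q.1 j - q.2 j.succ))} := by
    intro u hu v hv a b ha hb hab
    simp only [Set.mem_setOf_eq] at hu hv ⊢
    have happ1 : ∀ j : Fin n, (a • u + b • v).1 j = a * u.1 j + b * v.1 j :=
      fun j => rfl
    have happ2 : ∀ j : Fin (n + 1), (a • u + b • v).2 j = a * u.2 j + b * v.2 j :=
      fun j => rfl
    have e1 : ∑ j ∈ J1, (fbar - d) * (fbar * (a • u + b • v).1 j
        + (a • u + b • v).2 j.succ)
        = a * (∑ j ∈ J1, (fbar - d) * (fbar * u.1 j + u.2 j.succ))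
          + b * (∑ j ∈ J1, (fbar - d) * (fbar * v.1 j + v.2 j.succ)) := by
      rw [Finset.mul_sum, Finset.mul_sum, ← Finset.sum_add_distrib]
      exact Finset.sum_congr rfl fun j _ => by rw [happ1 j, happ2 j.succ]; ring
    have e2 : ∑ j ∈ J2, (fbar - d) * d * (a • u + b • v).1 j
        = a * (∑ j ∈ J2, (fbar - d) * d * u.1 j)
          + b * (∑ j ∈ J2, (fbar - d) * d * v.1 j) := by
      rw [Finset.mul_sum, Finset.mul_sum, ← Finset.sum_add_distrib]
      exact Finset.sum_congr rfl fun j _ => by rw [happ1 j]; ring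
    have e3 : ∑ j ∈ J3, d * (fbar * (a • u + b • v).1 j
        - (a • u + b • v).2 j.succ)
        = a * (∑ j ∈ J3, d * (fbar * u.1 j - u.2 j.succ))
          + b * (∑ j ∈ J3, d * (fbar * v.1 j - v.2 j.succ)) := by
      rw [Finset.mul_sum, Finset.mul_sum, ← Finset.sum_add_distrib]
      exact Finset.sum_congr rfl fun j _ => by rw [happ1 j, happ2 j.succ]; ring
    rw [e1, e2, e3]
    have habc : a * ((fbar - d) * d) + b * ((fbar - d) * d) = (fbar - d) * d := by
      rw [← add_mul, hab, one_mul]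
    nlinarith [mul_le_mul_of_nonneg_left hu ha, mul_le_mul_of_nonneg_left hv hb, habc]
  intro p hp
  exact convexHull_min (fun q hq => key q hq) hconv hp
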